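/- Let k_1 ≥ k_2 ≥ ... ≥ k_t ≥ 2 and n be positive integers, and ε > 0 a small constant, with n sufficiently large and n(1-ε) ≤ Σ_{i=1}^t k_i ≤ n - n·(8·k_1·ln n / n)^{1/k_1}. Then (k_1·k_2/n^2)^{1/t} > 1 - (1/2)·(1 - (Σ_{i=1}^t k_i)/n)^{k_1}. -/

import Mathlib

open Finset Real

set_option maxHeartbeats 1000000

/-- Lemma 3.4: if `n(1-ε) ≤ Σ kᵢ ≤ n - n (8 k₁ ln n / n)^(1/k₁)` with `ε` small,
`k₁ ≥ k₂ ≥ … ≥ k_t ≥ 2`, and `n` sufficiently large (depending on `k₁ = K` and `ε`),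
then `(k₁ k₂ / n²)^(1/t) > 1 - (1/2) (1 - (Σ kᵢ)/n)^(k₁)`. -/
theorem sum_large_root_inequality
    (K : ℕ) (ε : ℝ) (hε0 : 0 < ε) (hε1 : ε < 1) :
    ∃ N : ℕ, ∀ n ≥ N, ∀ t : ℕ, ∀ ht : 2 ≤ t, ∀ k : Fin t → ℕ,
      k ⟨0, by omega⟩ = K →
      (∀ i j : Fin t, i ≤ j → k j ≤ k i) →
      (∀ i, 2 ≤ k i) →
      ((n : ℝ) * (1 - ε) ≤ ∑ i : Fin t, (k i : ℝ)) →
      ((∑ i : Fin t, (k i : ℝ)) ≤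
        n - n * ((8 * K * Real.log n / n) ^ ((1 : ℝ) / K))) →
      ((k ⟨0, by omega⟩ : ℝ) * (k ⟨1, by omega⟩ : ℝ) / (n : ℝ) ^ 2) ^ ((1 : ℝ) / t) >
        1 - (1 / 2) * (1 - (∑ i : Fin t, (k i : ℝ)) / n) ^ (k ⟨0, by omega⟩) := by
  have hε1' : (0:ℝ) < 1 - ε := by linarith
  have hc : (0:ℝ) < (1/2) * (1/4)^K := by positivity
  have hlog : Filter.Tendsto (fun x : ℝ => Real.log x / x) Filter.atTop (nhds 0) := by
    have := Real.tendsto_pow_log_div_mul_add_atTop 1 0 1 one_ne_zero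
    simpa using this
  have hlim : Filter.Tendsto (fun n : ℕ => (2*K/(1-ε)) * (Real.log n / n))
      Filter.atTop (nhds 0) := by
    have := (hlog.comp tendsto_natCast_atTop_atTop).const_mul (2*(K:ℝ)/(1-ε))
    simpa using this
  obtain ⟨N₀, hN₀⟩ := Filter.eventually_atTop.mp (hlim.eventually_lt_const hc)
  refine ⟨max 3 N₀, ?_⟩
  intro n hn t ht k hk0 hmono hk2 hlow hhigh
  have hn3 : 3 ≤ n := le_trans (le_max_left _ _) hn
  have hnR : (3:ℝ) ≤ n := by exact_mod_cast hn3
  have hn0 : (0:ℝ) < n := by linarith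
  have hlogpos : 0 < Real.log n := Real.log_pos (by linarith)
  have hK2 : 2 ≤ K := hk0 ▸ hk2 ⟨0, by omega⟩
  have hKR : (2:ℝ) ≤ K := by exact_mod_cast hK2
  have ht0 : (0:ℝ) < t := by positivity
  set S : ℝ := ∑ i : Fin t, (k i : ℝ) with hSdef
  have hkK : ∀ i : Fin t, (k i : ℝ) ≤ K := by
    intro i
    have h := hmono ⟨0, by omega⟩ i (by simp [Fin.le_def])
    rw [hk0] at h
    exact_mod_cast h
  have hS_le_tK : S ≤ t * K := by
    calc S ≤ ∑ _i : Fin t, (K:ℝ) := Finset.sum_le_sum fun i _ => hkK i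
    _ = t * K := by simp [mul_comm]
  have hSpos : 0 < S := lt_of_lt_of_le (by positivity) hlow
  set x : ℝ := 1 - S / n with hxdef
  set δ : ℝ := (8 * K * Real.log n / n) ^ ((1:ℝ)/K) with hδdef
  have hbase0 : (0:ℝ) ≤ 8 * K * Real.log n / n := by positivity
  have hδ0 : 0 ≤ δ := Real.rpow_nonneg hbase0 _
  have hδx : δ ≤ x := by
    have h1 : δ * n ≤ n - S := by nlinarith [hhigh]
    have : δ ≤ (n - S) / n := (le_div_iff₀ hn0).mpr h1
    have hx_eq : x = (n - S) / n := by rw [hxdef, sub_div, div_self hn0.ne']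
    linarith [hx_eq ▸ this]
  have hx0 : 0 ≤ x := le_trans hδ0 hδx
  have hδK : δ ^ K = 8 * K * Real.log n / n := by
    rw [hδdef, ← Real.rpow_natCast _ K, ← Real.rpow_mul hbase0,
      one_div_mul_cancel (by positivity : (K:ℝ) ≠ 0), Real.rpow_one]
  have hxK : 8 * K * Real.log n / n ≤ x ^ K := by
    rw [← hδK]; exact pow_le_pow_left₀ hδ0 hδx K
  -- lower bound for LHS
  have hA4 : (4:ℝ)/(n:ℝ)^2 ≤ (k ⟨0, by omega⟩ : ℝ) * (k ⟨1, by omega⟩ : ℝ) / (n:ℝ)^2 := by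
    have h0 : (2:ℝ) ≤ (k ⟨0, by omega⟩ : ℝ) := by exact_mod_cast hk2 _
    have h1 : (2:ℝ) ≤ (k ⟨1, by omega⟩ : ℝ) := by exact_mod_cast hk2 _
    have : (4:ℝ) ≤ (k ⟨0, by omega⟩ : ℝ) * (k ⟨1, by omega⟩ : ℝ) := by nlinarith
    gcongr
  have hrpow1 : ((4:ℝ)/(n:ℝ)^2) ^ ((1:ℝ)/t) ≤
      ((k ⟨0, by omega⟩ : ℝ) * (k ⟨1, by omega⟩ : ℝ) / (n:ℝ)^2) ^ ((1:ℝ)/t) :=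
    Real.rpow_le_rpow (by positivity) hA4 (by positivity)
  have hrpow2 : 1 - 2 * Real.log n / t ≤ ((4:ℝ)/(n:ℝ)^2) ^ ((1:ℝ)/t) := by
    rw [Real.rpow_def_of_pos (by positivity)]
    have hexp := Real.add_one_le_exp (Real.log (4/(n:ℝ)^2) * ((1:ℝ)/t))
    have hlog4 : Real.log (4/(n:ℝ)^2) = Real.log 4 - 2 * Real.log n := by
      rw [Real.log_div (by norm_num) (by positivity), Real.log_pow]
      push_cast; ring
    have h4 : 0 ≤ Real.log 4 / t := by
      have : (0:ℝ) ≤ Real.log 4 := Real.log_nonneg (by norm_num)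
      positivity
    have heq : Real.log (4/(n:ℝ)^2) * ((1:ℝ)/t)
        = Real.log 4 / t - 2 * Real.log n / t := by rw [hlog4]; ring
    linarith [heq ▸ hexp]
  have hrpow3 : 2 * Real.log n / t ≤ 2 * K * Real.log n / S := by
    rw [div_le_div_iff₀ ht0 hSpos]
    nlinarith [mul_le_mul_of_nonneg_left hS_le_tK (le_of_lt hlogpos)]
  -- key inequality
  have hL : 0 < (K:ℝ) * Real.log n := mul_pos (by linarith) hlogpos
  have hkey : 2 * K * Real.log n / S < (1/2) * x ^ K := by
    by_cases hcase : (3/4:ℝ) * n ≤ S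
    · have ha : 2 * K * Real.log n / S ≤ (8/3) * K * Real.log n / n := by
        rw [div_le_div_iff₀ hSpos hn0]
        have h1 := mul_le_mul_of_nonneg_left hcase hL.le
        nlinarith [h1]
      have hb : (8/3) * K * Real.log n / n < (1/2) * (8 * K * Real.log n / n) := by
        rw [div_lt_iff₀ hn0]
        have h2 : (8/3) * ((K:ℝ) * Real.log n) < 4 * ((K:ℝ) * Real.log n) := by linarith
        calc (8/3) * K * Real.log n = (8/3) * ((K:ℝ) * Real.log n) := by ring
          _ < 4 * ((K:ℝ) * Real.log n) := h2
          _ = 1/2 * (8 * K * Real.log n / n) * n := by field_simp; ring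
      calc 2 * K * Real.log n / S ≤ (8/3) * K * Real.log n / n := ha
        _ < (1/2) * (8 * K * Real.log n / n) := hb
        _ ≤ (1/2) * x ^ K := by linarith [hxK]
    · push_neg at hcase
      have hx14 : (1/4:ℝ) < x := by
        have : S / n < 3/4 := (div_lt_iff₀ hn0).mpr (by linarith)
        rw [hxdef]; linarith
      have hxK4 : (1/4:ℝ)^K < x^K := by
        apply pow_lt_pow_left₀ hx14 (by norm_num)
        omega
      have hNb := hN₀ n (le_trans (le_max_right _ _) hn)
      have hsmall : 2 * K * Real.log n / S ≤ (2*K/(1-ε)) * (Real.log n / n) := by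
        have heq : (2*(K:ℝ)/(1-ε)) * (Real.log n / n)
            = 2 * K * Real.log n / (n * (1-ε)) := by
          field_simp
        rw [heq, div_le_div_iff₀ hSpos (by positivity)]
        have h3 := mul_le_mul_of_nonneg_left hlow (by linarith : (0:ℝ) ≤ 2 * ((K:ℝ) * Real.log n))
        nlinarith [h3]
      calc 2 * K * Real.log n / S ≤ (2*K/(1-ε)) * (Real.log n / n) := hsmall
        _ < (1/2) * (1/4)^K := hNb
        _ ≤ (1/2) * x^K := by linarith
  rw [hk0]
  have hfin : 1 - (1/2) * x ^ K < 1 - 2 * K * Real.log n / S := by linarith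
  calc 1 - (1/2) * (1 - S / n) ^ K = 1 - (1/2) * x ^ K := by rw [hxdef]
    _ < 1 - 2 * K * Real.log n / S := hfin
    _ ≤ 1 - 2 * Real.log n / t := by linarith
    _ ≤ ((4:ℝ)/(n:ℝ)^2) ^ ((1:ℝ)/t) := hrpow2
    _ ≤ _ := by
        rw [hk0] at hrpow1
        exact hrpow1
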